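/- Let n be a positive integer, I a subset of {0,...,2n-1} with cardinality n, and suppose a real polynomial P of degree less than 2n satisfies P^{(i)}(0) = 0 for all i ∈ {0,...,n-1} and P^{(i)}(1) = 0 for all i ∈ I. Then P = 0. -/

import Mathlib

open Polynomial Multiset

noncomputable section

private def po : ℝ → Prop := fun x => 0 ≤ x ∧ x < 1
private def pc : ℝ → Prop := fun x => 0 ≤ x ∧ x ≤ 1

private instance : DecidablePred po := fun _ => instDecidableAnd
private instance : DecidablePred pc := fun _ => instDecidableAnd

/-- interval versions of Rolle root counting, for a predicate closed under betweenness -/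
private theorem filt_toFinset_le {s : ℝ → Prop} [DecidablePred s]
    (hconv : ∀ x y z : ℝ, s x → s y → x < z → z < y → s z) (p : ℝ[X]) :
    (p.roots.filter s).toFinset.card ≤
      (((derivative p).roots.filter s).toFinset \ (p.roots.filter s).toFinset).card + 1 := by
  rcases eq_or_ne (derivative p) 0 with hp' | hp'
  · rcases eq_or_ne p 0 with h | h
    · simp [h]
    · rw [eq_C_of_derivative_eq_zero hp'] at h ⊢
      rw [roots_C]
      simp
  have hp : p ≠ 0 := ne_of_apply_ne derivative (by rwa [derivative_zero])
  refine Finset.card_le_diff_of_interleaved fun x hx y hy hxy hxy' => ?_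
  rw [Multiset.mem_toFinset, Multiset.mem_filter, mem_roots hp] at hx hy
  obtain ⟨z, hz1, hz2⟩ := exists_deriv_eq_zero hxy p.continuousOn (hx.1.trans hy.1.symm)
  refine ⟨z, ?_, hz1.1, hz1.2⟩
  rw [Multiset.mem_toFinset, Multiset.mem_filter, mem_roots hp']
  exact ⟨by rwa [IsRoot, ← p.deriv], hconv x y z hx.2 hy.2 hz1.1 hz1.2⟩

private theorem card_filt_le {s : ℝ → Prop} [DecidablePred s]
    (hconv : ∀ x y z : ℝ, s x → s y → x < z → z < y → s z) (p : ℝ[X]) :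
    Multiset.card (p.roots.filter s) ≤ Multiset.card ((derivative p).roots.filter s) + 1 := by
  set R := p.roots.filter s with hR
  set R' := (derivative p).roots.filter s with hR'
  calc
    Multiset.card R = ∑ x ∈ R.toFinset, R.count x := (Multiset.toFinset_sum_count_eq _).symm
    _ = ∑ x ∈ R.toFinset, (R.count x - 1 + 1) :=
      (Eq.symm <| Finset.sum_congr rfl fun _ hx => tsub_add_cancel_of_le <|
        Nat.succ_le_iff.2 <| Multiset.count_pos.2 <| Multiset.mem_toFinset.1 hx)
    _ = (∑ x ∈ R.toFinset, (R.count x - 1)) + R.toFinset.card := by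
      simp only [Finset.sum_add_distrib, Finset.card_eq_sum_ones]
    _ ≤ (∑ x ∈ R.toFinset, R'.count x) + ((R'.toFinset \ R.toFinset).card + 1) := by
      refine add_le_add (Finset.sum_le_sum fun x hx => ?_) (filt_toFinset_le hconv p)
      have hsx : s x := (Multiset.mem_filter.1 (Multiset.mem_toFinset.1 hx)).2
      rw [hR, hR', Multiset.count_filter_of_pos hsx, Multiset.count_filter_of_pos hsx,
        count_roots, count_roots]
      exact rootMultiplicity_sub_one_le_derivative_rootMultiplicity _ _
    _ ≤ (∑ x ∈ R.toFinset, R'.count x) +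
          ((∑ x ∈ R'.toFinset \ R.toFinset, R'.count x) + 1) := by
      refine add_le_add_right (add_le_add_left ((Finset.card_eq_sum_ones _).trans_le ?_) _) _
      refine Finset.sum_le_sum fun x hx => Nat.succ_le_iff.2 <| ?_
      rw [Multiset.count_pos, ← Multiset.mem_toFinset]
      exact (Finset.mem_sdiff.1 hx).1
    _ = Multiset.card R' + 1 := by
      rw [← add_assoc, ← Finset.sum_union Finset.disjoint_sdiff,
        Finset.union_sdiff_self_eq_union, ← Multiset.toFinset_sum_count_eq,
        ← Finset.sum_subset Finset.subset_union_right]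
      intro x _ hx₂
      simpa only [Multiset.mem_toFinset, Multiset.count_eq_zero] using hx₂

private theorem po_conv : ∀ x y z : ℝ, po x → po y → x < z → z < y → po z :=
  fun _ _ _ hx hy h1 h2 => ⟨hx.1.trans h1.le, h2.trans hy.2⟩

private theorem pc_conv : ∀ x y z : ℝ, pc x → pc y → x < z → z < y → pc z :=
  fun _ _ _ hx hy h1 h2 => ⟨hx.1.trans h1.le, h2.le.trans hy.2⟩

private theorem card_pc (p : ℝ[X]) :
    Multiset.card (p.roots.filter pc) =
      Multiset.card (p.roots.filter po) + p.rootMultiplicity 1 := by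
  have h1 : p.roots.filter po + p.roots.filter (fun x => x = 1)
      = p.roots.filter (fun x => po x ∨ x = 1) + p.roots.filter (fun x => po x ∧ x = 1) :=
    Multiset.filter_add_filter po (fun x => x = 1) p.roots
  have h2 : p.roots.filter (fun x => po x ∨ x = 1) = p.roots.filter pc := by
    apply Multiset.filter_congr
    intro x _
    constructor
    · rintro (⟨h, h'⟩ | rfl)
      · exact ⟨h, h'.le⟩
      · exact ⟨zero_le_one, le_refl 1⟩
    · rintro ⟨h, h'⟩
      rcases lt_or_eq_of_le h' with h'' | h''
      · exact Or.inl ⟨h, h''⟩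
      · exact Or.inr h''
  have h3 : p.roots.filter (fun x => po x ∧ x = 1) = 0 := by
    rw [Multiset.filter_eq_nil]
    rintro x hx ⟨⟨_, h⟩, rfl⟩
    exact absurd rfl h.ne
  have h4 : Multiset.card (p.roots.filter (fun x => x = 1)) = p.rootMultiplicity 1 := by
    rw [← count_roots]
    rw [Multiset.count, Multiset.countP_eq_card_filter]
    congr 1
    apply Multiset.filter_congr
    intro x _
    exact ⟨fun h => h.symm, fun h => h.symm⟩
  rw [h2, h3, add_zero] at h1
  rw [← h1, Multiset.card_add, h4]

private theorem key : ∀ d : ℕ, ∀ P : ℝ[X], P ≠ 0 → P.natDegree ≤ d →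
    ∀ Z : Finset ℕ, (∀ i ∈ Z, i ≤ d) → (∀ i ∈ Z, (derivative^[i] P).eval 1 = 0) →
    Multiset.card (P.roots.filter po) + Z.card ≤ d := by
  intro d
  induction d with
  | zero =>
    intro P hP hdeg Z hZle hZ
    have hPC : P = C (P.coeff 0) := eq_C_of_natDegree_eq_zero (Nat.le_zero.1 hdeg)
    have hc : P.coeff 0 ≠ 0 := fun h => hP (by rw [hPC, h]; simp)
    have hroots : P.roots = 0 := by rw [hPC]; exact roots_C _
    have hZe : Z = ∅ := by
      rw [Finset.eq_empty_iff_forall_notMem]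
      intro i hi
      have := Nat.le_zero.1 (hZle i hi)
      subst this
      have := hZ 0 hi
      simp only [Function.iterate_zero, id_eq] at this
      rw [hPC] at this
      simp at this
      exact hc this
    simp [hroots, hZe]
  | succ d ih =>
    intro P hP hdeg Z hZle hZ
    rcases eq_or_ne (derivative P) 0 with hP' | hP'
    · -- P is a nonzero constant
      have hPC : P = C (P.coeff 0) := by
        have := natDegree_eq_zero_of_derivative_eq_zero hP'
        exact eq_C_of_natDegree_eq_zero this
      have hc : P.coeff 0 ≠ 0 := fun h => hP (by rw [hPC, h]; simp)
      have hroots : P.roots = 0 := by rw [hPC]; exact roots_C _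
      have h0Z : 0 ∉ Z := by
        intro hi
        have := hZ 0 hi
        simp only [Function.iterate_zero, id_eq] at this
        rw [hPC] at this
        simp at this
        exact hc this
      have : Z ⊆ Finset.Icc 1 (d+1) := by
        intro i hi
        rw [Finset.mem_Icc]
        exact ⟨Nat.one_le_iff_ne_zero.2 (fun h => h0Z (h ▸ hi)), hZle i hi⟩
      have := Finset.card_le_card this
      rw [Nat.card_Icc] at this
      simp only [hroots, Multiset.filter_zero, Multiset.card_zero, zero_add]
      omega
    have hdeg' : (derivative P).natDegree ≤ d := by
      have := natDegree_derivative_le P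
      omega
    by_cases h0Z : 0 ∈ Z
    · -- P(1) = 0
      have heval : P.eval 1 = 0 := by
        have := hZ 0 h0Z
        simpa using this
      have hm : 1 ≤ P.rootMultiplicity 1 := (rootMultiplicity_pos hP).2 heval
      have hm' : (derivative P).rootMultiplicity 1 = P.rootMultiplicity 1 - 1 :=
        derivative_rootMultiplicity_of_root heval
      -- Z' on derivative
      set Z' := (Z.erase 0).image (· - 1) with hZ'def
      have hcard' : Z'.card = Z.card - 1 := by
        rw [hZ'def, Finset.card_image_of_injOn, Finset.card_erase_of_mem h0Z]
        intro a ha b hb hab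
        have ha1 : 1 ≤ a := Nat.one_le_iff_ne_zero.2 (Finset.ne_of_mem_erase ha)
        have hb1 : 1 ≤ b := Nat.one_le_iff_ne_zero.2 (Finset.ne_of_mem_erase hb)
        dsimp only at hab
        omega
      have hZ'le : ∀ j ∈ Z', j ≤ d := by
        intro j hj
        rw [hZ'def, Finset.mem_image] at hj
        obtain ⟨i, hi, rfl⟩ := hj
        have := hZle i (Finset.mem_of_mem_erase hi)
        omega
      have hZ'ev : ∀ j ∈ Z', (derivative^[j] (derivative P)).eval 1 = 0 := by
        intro j hj
        rw [hZ'def, Finset.mem_image] at hj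
        obtain ⟨i, hi, rfl⟩ := hj
        have hi1 : 1 ≤ i := Nat.one_le_iff_ne_zero.2 (Finset.ne_of_mem_erase hi)
        have := hZ i (Finset.mem_of_mem_erase hi)
        rw [← Function.iterate_succ_apply]
        rwa [Nat.succ_eq_add_one, Nat.sub_add_cancel hi1]
      have hIH := ih (derivative P) hP' hdeg' Z' hZ'le hZ'ev
      -- Rolle with closed interval
      have hrolle := card_filt_le pc_conv P
      have e1 := card_pc P
      have e2 := card_pc (derivative P)
      have hcount1 : 1 ≤ Z.card := Finset.card_pos.2 ⟨0, h0Z⟩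
      have hmle : P.rootMultiplicity 1 ≤ Multiset.card (P.roots.filter pc) := by
        rw [← count_roots, ← Multiset.count_filter_of_pos (p := pc) ⟨zero_le_one, le_refl (1:ℝ)⟩]
        exact Multiset.count_le_card _ _
      omega
    · set Z' := Z.image (· - 1) with hZ'def
      have hcard' : Z'.card = Z.card := by
        rw [hZ'def, Finset.card_image_of_injOn]
        intro a ha b hb hab
        have ha1 : 1 ≤ a := Nat.one_le_iff_ne_zero.2 (fun h => h0Z (h ▸ ha))
        have hb1 : 1 ≤ b := Nat.one_le_iff_ne_zero.2 (fun h => h0Z (h ▸ hb))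
        dsimp only at hab
        omega
      have hZ'le : ∀ j ∈ Z', j ≤ d := by
        intro j hj
        rw [hZ'def, Finset.mem_image] at hj
        obtain ⟨i, hi, rfl⟩ := hj
        have := hZle i hi
        omega
      have hZ'ev : ∀ j ∈ Z', (derivative^[j] (derivative P)).eval 1 = 0 := by
        intro j hj
        rw [hZ'def, Finset.mem_image] at hj
        obtain ⟨i, hi, rfl⟩ := hj
        have hi1 : 1 ≤ i := Nat.one_le_iff_ne_zero.2 (fun h => h0Z (h ▸ hi))
        have := hZ i hi
        rw [← Function.iterate_succ_apply]
        rwa [Nat.succ_eq_add_one, Nat.sub_add_cancel hi1]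
      have hIH := ih (derivative P) hP' hdeg' Z' hZ'le hZ'ev
      have hrolle := card_filt_le po_conv P
      omega

end

theorem stmt6 (n : ℕ) (hn : 0 < n) (I : Finset ℕ) (hI : I ⊆ Finset.range (2*n))
    (hcard : I.card = n) (P : Polynomial ℝ) (hdeg : P.degree < 2*n)
    (h0 : ∀ i < n, (Polynomial.derivative^[i] P).eval 0 = 0)
    (h1 : ∀ i ∈ I, (Polynomial.derivative^[i] P).eval 1 = 0) :
    P = 0 := by
  by_contra hP
  set d := P.natDegree with hd
  have hdlt : d < 2 * n := (Polynomial.natDegree_lt_iff_degree_lt hP).2 (by exact_mod_cast hdeg)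
  -- root multiplicity at 0 is at least n
  have hmult : n ≤ P.rootMultiplicity 0 := by
    have := Polynomial.lt_rootMultiplicity_of_isRoot_iterate_derivative (t := (0:ℝ))
      (n := n - 1) hP (fun m hm => h0 m (by omega))
    omega
  have hrho : n ≤ Multiset.card (P.roots.filter po) := by
    calc n ≤ P.rootMultiplicity 0 := hmult
    _ = P.roots.count 0 := (Polynomial.count_roots P).symm
    _ = (P.roots.filter po).count 0 :=
        (Multiset.count_filter_of_pos ⟨le_refl (0:ℝ), zero_lt_one⟩).symm
    _ ≤ Multiset.card (P.roots.filter po) := Multiset.count_le_card _ _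
  set Z := I.filter (· ≤ d) with hZdef
  have hZle : ∀ i ∈ Z, i ≤ d := fun i hi => (Finset.mem_filter.1 hi).2
  have hZev : ∀ i ∈ Z, (Polynomial.derivative^[i] P).eval 1 = 0 :=
    fun i hi => h1 i (Finset.mem_filter.1 hi).1
  have hkey := key d P hP le_rfl Z hZle hZev
  have hcompl : (I.filter (fun i => ¬ i ≤ d)).card ≤ 2 * n - d - 1 := by
    have hsub : I.filter (fun i => ¬ i ≤ d) ⊆ Finset.Ioo d (2*n) := by
      intro i hi
      rw [Finset.mem_filter] at hi
      rw [Finset.mem_Ioo]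
      exact ⟨by omega, Finset.mem_range.1 (hI hi.1)⟩
    have := Finset.card_le_card hsub
    rwa [Nat.card_Ioo] at this
  have hsum : Z.card + (I.filter (fun i => ¬ i ≤ d)).card = I.card :=
    Finset.card_filter_add_card_filter_not _
  omega
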